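/- arXiv:2105.06996 — 2 statements merged into one kernel-verified Lean document; each statement's English description precedes it below -/
import Mathlib

section
/- (Conjugated mixer.) For every cost function c : (Fin n → Bool) → ℝ and every real γ, the phase operator conjugates the transverse-field Hamiltonian as exp((iγ)•C) · B · exp(−(iγ)•C) = ∑_{j} exp(−(iγ)•(X_j·C·X_j − C)) · X_j, and this also equals ∑_{j} X_j · exp((iγ)•(X_j·C·X_j − C)). -/
open Matrix Asymptotics

noncomputable section

abbrev Bits (n : ℕ) := Fin n → Bool

/-- `x` with bit `j` flipped. -/
def flipBit {n : ℕ} (j : Fin n) (x : Bits n) : Bits n := Function.update x j (!x j)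

/-- The bit-flip operator `X_j`. -/
def Xop {n : ℕ} (j : Fin n) : Matrix (Bits n) (Bits n) ℂ :=
  fun x y => if y = flipBit j x then 1 else 0

/-- The transverse-field mixing Hamiltonian `B = ∑ⱼ Xⱼ`. -/
def Bop (n : ℕ) : Matrix (Bits n) (Bits n) ℂ := ∑ j : Fin n, Xop j

/-- The cost Hamiltonian: diagonal matrix with entries `c x`. -/
def Cop {n : ℕ} (c : Bits n → ℝ) : Matrix (Bits n) (Bits n) ℂ :=
  Matrix.diagonal fun x => (c x : ℂ)

/-- The gradient superoperator `∇A = [B, A]`. -/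
def gradB {n : ℕ} (A : Matrix (Bits n) (Bits n) ℂ) : Matrix (Bits n) (Bits n) ℂ :=
  Bop n * A - A * Bop n

/-- The gradient with respect to the cost Hamiltonian `∇_C A = [C, A]`. -/
def gradC {n : ℕ} (c : Bits n → ℝ) (A : Matrix (Bits n) (Bits n) ℂ) :
    Matrix (Bits n) (Bits n) ℂ :=
  Cop c * A - A * Cop c

/-- The uniform superposition state `|s⟩`, every entry `(2^n)^{-1/2}`. -/
def sVec (n : ℕ) : Bits n → ℂ := fun _ => ((Real.sqrt (2 ^ n))⁻¹ : ℝ)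

/-- Initial-state expectation value `⟨A⟩₀ = ⟨s|A|s⟩`. -/
def expect0 {n : ℕ} (A : Matrix (Bits n) (Bits n) ℂ) : ℂ :=
  star (sVec n) ⬝ᵥ (A *ᵥ sVec n)

/-- Partial cost difference `∂ⱼc(x) = c(x⁽ʲ⁾) − c(x)`. -/
def pd {n : ℕ} (c : Bits n → ℝ) (j : Fin n) (x : Bits n) : ℝ := c (flipBit j x) - c x

/-- Cost divergence `dc(x) = ∑ⱼ ∂ⱼc(x)`. -/
def dcFun {n : ℕ} (c : Bits n → ℝ) (x : Bits n) : ℝ := ∑ j : Fin n, pd c j x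

lemma flipBit_flip_flip {n : ℕ} (j : Fin n) (x : Bits n) : flipBit j (flipBit j x) = x := by
  unfold flipBit
  simp [Function.update_idem]

lemma XCX {n : ℕ} (j : Fin n) (c : Bits n → ℝ) :
    Xop j * Cop c * Xop j = Matrix.diagonal (fun x => (c (flipBit j x) : ℂ)) := by
  ext x y
  unfold Cop
  rw [mul_assoc, Matrix.mul_apply]
  simp only [Matrix.diagonal_mul, Xop, Matrix.diagonal_apply, ite_mul, one_mul, zero_mul]
  rw [Finset.sum_eq_single (flipBit j x)]
  · simp [flipBit_flip_flip, eq_comm]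
  · intro b _ hb; simp [hb]
  · simp

lemma expSmulDiag {n : ℕ} (a : ℂ) (v : Bits n → ℂ) :
    NormedSpace.exp (a • (Matrix.diagonal v : Matrix (Bits n) (Bits n) ℂ))
      = Matrix.diagonal (fun x => NormedSpace.exp (a * v x)) := by
  rw [← Matrix.diagonal_smul, Matrix.exp_diagonal]
  congr 1
  funext x
  rw [Pi.exp_def]
  simp [smul_eq_mul]

lemma diag_X_diag {n : ℕ} (j : Fin n) (f g : Bits n → ℂ) :
    Matrix.diagonal f * Xop j * Matrix.diagonal g
      = fun x y => if y = flipBit j x then f x * g (flipBit j x) else 0 := by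
  ext x y
  rw [Matrix.mul_diagonal, Matrix.diagonal_mul]
  unfold Xop
  by_cases h : y = flipBit j x <;> simp [h]

lemma conj_Xop {n : ℕ} (j : Fin n) (c : Bits n → ℝ) (a : ℂ) :
    NormedSpace.exp (a • Cop c) * Xop j * NormedSpace.exp ((-a) • Cop c)
      = NormedSpace.exp ((-a) • (Xop j * Cop c * Xop j - Cop c)) * Xop j ∧
    NormedSpace.exp (a • Cop c) * Xop j * NormedSpace.exp ((-a) • Cop c)
      = Xop j * NormedSpace.exp (a • (Xop j * Cop c * Xop j - Cop c)) := by
  have hD : Xop j * Cop c * Xop j - Cop c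
      = Matrix.diagonal (fun x => ((c (flipBit j x) : ℂ) - c x)) := by
    rw [XCX]; unfold Cop; rw [Matrix.diagonal_sub]
  rw [hD]
  unfold Cop
  rw [expSmulDiag, expSmulDiag, expSmulDiag, expSmulDiag, diag_X_diag]
  constructor <;> ext x y
  · rw [Matrix.diagonal_mul]
    unfold Xop
    by_cases h : y = flipBit j x <;> simp only [h, if_true, if_false, mul_one, mul_zero]
    rw [← NormedSpace.exp_add]
    ring_nf
  · rw [Matrix.mul_diagonal]
    unfold Xop
    by_cases h : y = flipBit j x <;> simp only [h, if_true, if_false, one_mul, zero_mul]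
    rw [flipBit_flip_flip, ← NormedSpace.exp_add]
    ring_nf

theorem stmt13 (n : ℕ) (hn : 1 ≤ n) (c : Bits n → ℝ) (γ : ℝ) :
    NormedSpace.exp ((Complex.I * (γ : ℂ)) • Cop c) * Bop n *
        NormedSpace.exp ((-(Complex.I * (γ : ℂ))) • Cop c)
      = ∑ j : Fin n,
          NormedSpace.exp ((-(Complex.I * (γ : ℂ))) • (Xop j * Cop c * Xop j - Cop c))
            * Xop j ∧
    NormedSpace.exp ((Complex.I * (γ : ℂ)) • Cop c) * Bop n *
        NormedSpace.exp ((-(Complex.I * (γ : ℂ))) • Cop c)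
      = ∑ j : Fin n,
          Xop j *
            NormedSpace.exp ((Complex.I * (γ : ℂ)) • (Xop j * Cop c * Xop j - Cop c)) := by
  have key : NormedSpace.exp ((Complex.I * (γ : ℂ)) • Cop c) * Bop n *
      NormedSpace.exp ((-(Complex.I * (γ : ℂ))) • Cop c)
      = ∑ j : Fin n, NormedSpace.exp ((Complex.I * (γ : ℂ)) • Cop c) * Xop j *
          NormedSpace.exp ((-(Complex.I * (γ : ℂ))) • Cop c) := by
    unfold Bop
    rw [Finset.mul_sum, Finset.sum_mul]
  constructor
  · rw [key]
    exact Finset.sum_congr rfl fun j _ => (conj_Xop j c _).1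
  · rw [key]
    exact Finset.sum_congr rfl fun j _ => (conj_Xop j c _).2
end
end

section
/- (Gradients of QUBO Hamiltonians.) Let C = a₀•I + C₁ + C₂ where C₁ = ∑_j a_j • Z_j and C₂ = ∑_{j<k} a_{jk} • Z_j·Z_k with real coefficients a₀, a_j, a_{jk}. Then for every integer m ≥ 1: ∇^{2m} C = 4^m • C₁ + 16^{m−1} • ∇²C₂, and ∇^{2m+1} C = 4^m • ∇C₁ + 16^m • ∇C₂. -/
open Matrix Asymptotics

noncomputable section

/-- The Pauli `Z` operator on qubit `j`. -/
def Zop {n : ℕ} (j : Fin n) : Matrix (Bits n) (Bits n) ℂ :=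
  Matrix.diagonal fun x => if x j then -1 else 1

variable {n : ℕ}

lemma flipBit_apply_self (j : Fin n) (x : Bits n) : flipBit j x j = !x j := by
  simp [flipBit]

lemma flipBit_apply_ne {i j : Fin n} (h : j ≠ i) (x : Bits n) : flipBit i x j = x j := by
  simp [flipBit, Function.update_of_ne h]

lemma flipBit_flipBit (j : Fin n) (x : Bits n) : flipBit j (flipBit j x) = x := by
  funext k
  rcases eq_or_ne k j with rfl | h
  · simp [flipBit]
  · simp [flipBit, Function.update_of_ne h]

lemma flipBit_comm (i j : Fin n) (x : Bits n) :
    flipBit i (flipBit j x) = flipBit j (flipBit i x) := by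
  rcases eq_or_ne i j with rfl | hij
  · rfl
  · funext k
    simp only [flipBit, Function.update_apply]
    split_ifs <;> simp_all

lemma Xop_mul_apply (j : Fin n) (M : Matrix (Bits n) (Bits n) ℂ) (x y : Bits n) :
    (Xop j * M) x y = M (flipBit j x) y := by
  rw [Matrix.mul_apply, Finset.sum_eq_single (flipBit j x)]
  · simp [Xop]
  · intro z _ hz; simp [Xop, hz]
  · simp

lemma mul_Xop_apply (j : Fin n) (M : Matrix (Bits n) (Bits n) ℂ) (x y : Bits n) :
    (M * Xop j) x y = M x (flipBit j y) := by
  rw [Matrix.mul_apply, Finset.sum_eq_single (flipBit j y)]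
  · simp [Xop, flipBit_flipBit]
  · intro z _ hz
    have hy : y ≠ flipBit j z := fun h => hz (by rw [h, flipBit_flipBit])
    simp [Xop, hy]
  · simp

lemma Xop_comm (i j : Fin n) : Xop i * Xop j = Xop j * Xop i := by
  ext x y
  rw [Xop_mul_apply, Xop_mul_apply]
  simp [Xop, flipBit_comm]

lemma Xop_mul_self (j : Fin n) : Xop j * Xop j = 1 := by
  ext x y
  rw [Xop_mul_apply]
  simp [Xop, flipBit_flipBit, Matrix.one_apply, eq_comm]

lemma eq_flipBit_iff (j : Fin n) (x y : Bits n) : (x = flipBit j y) ↔ (flipBit j x = y) :=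
  ⟨fun h => by rw [h, flipBit_flipBit], fun h => by rw [← h, flipBit_flipBit]⟩

lemma Xop_mul_Zop_of_ne {i j : Fin n} (h : i ≠ j) : Xop i * Zop j = Zop j * Xop i := by
  ext x y
  rw [Xop_mul_apply, mul_Xop_apply]
  simp only [Zop, Matrix.diagonal_apply]
  by_cases hxy : flipBit i x = y
  · rw [if_pos hxy, if_pos ((eq_flipBit_iff i x y).mpr hxy), flipBit_apply_ne (Ne.symm h)]
  · rw [if_neg hxy, if_neg fun h' => hxy ((eq_flipBit_iff i x y).mp h')]

lemma Zop_mul_Xop_self (j : Fin n) : Zop j * Xop j = -(Xop j * Zop j) := by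
  ext x y
  rw [Matrix.neg_apply, Xop_mul_apply, mul_Xop_apply]
  simp only [Zop, Matrix.diagonal_apply]
  by_cases hxy : flipBit j x = y
  · rw [if_pos ((eq_flipBit_iff j x y).mpr hxy), if_pos hxy, flipBit_apply_self]
    cases x j <;> simp
  · rw [if_neg fun h' => hxy ((eq_flipBit_iff j x y).mp h'), if_neg hxy, neg_zero]

-- continuation (appended to h1 for testing)
lemma gradB_add (M N : Matrix (Bits n) (Bits n) ℂ) :
    gradB (M + N) = gradB M + gradB N := by
  simp only [gradB, mul_add, add_mul]; abel

lemma gradB_smul (c : ℂ) (M : Matrix (Bits n) (Bits n) ℂ) :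
    gradB (c • M) = c • gradB M := by
  simp only [gradB, Matrix.mul_smul, Matrix.smul_mul, smul_sub]

lemma gradB_zero : gradB (0 : Matrix (Bits n) (Bits n) ℂ) = 0 := by simp [gradB]

lemma gradB_one : gradB (1 : Matrix (Bits n) (Bits n) ℂ) = 0 := by simp [gradB]

lemma gradB_sum {ι : Type*} (s : Finset ι) (f : ι → Matrix (Bits n) (Bits n) ℂ) :
    gradB (∑ i ∈ s, f i) = ∑ i ∈ s, gradB (f i) := by
  simp only [gradB, Finset.mul_sum, Finset.sum_mul, ← Finset.sum_sub_distrib]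

lemma gradB_eq_sum (M : Matrix (Bits n) (Bits n) ℂ) :
    gradB M = ∑ j : Fin n, (Xop j * M - M * Xop j) := by
  simp only [gradB, Bop, Finset.sum_mul, Finset.mul_sum, ← Finset.sum_sub_distrib]

lemma sum_eq_pair {M : Type*} [AddCommMonoid M] {j k : Fin n} (h : j ≠ k) (f : Fin n → M)
    (hf : ∀ i, i ≠ j → i ≠ k → f i = 0) : ∑ i, f i = f j + f k := by
  rw [← Finset.sum_pair h]
  refine (Finset.sum_subset (Finset.subset_univ _) ?_).symm
  intro i _ hi
  simp only [Finset.mem_insert, Finset.mem_singleton, not_or] at hi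
  exact hf i hi.1 hi.2

lemma gradB_Zop (j : Fin n) : gradB (Zop j) = (2:ℂ) • (Xop j * Zop j) := by
  rw [gradB_eq_sum, Finset.sum_eq_single j]
  · rw [Zop_mul_Xop_self, sub_neg_eq_add, two_smul]
  · intro i _ hij; rw [Xop_mul_Zop_of_ne hij, sub_self]
  · simp

lemma gradB_XZ (j : Fin n) : gradB (Xop j * Zop j) = (2:ℂ) • Zop j := by
  rw [gradB_eq_sum, Finset.sum_eq_single j]
  · rw [← mul_assoc, Xop_mul_self, one_mul, mul_assoc, Zop_mul_Xop_self, mul_neg,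
      ← mul_assoc, Xop_mul_self, one_mul, sub_neg_eq_add, two_smul]
  · intro i _ hij
    rw [← mul_assoc, Xop_comm i j, mul_assoc, Xop_mul_Zop_of_ne hij, ← mul_assoc, sub_self]
  · simp

lemma gradB2_Zop (j : Fin n) : gradB (gradB (Zop j)) = (4:ℂ) • Zop j := by
  rw [gradB_Zop, gradB_smul, gradB_XZ, smul_smul]; norm_num

lemma XP_comm {i j k : Fin n} (h : i ≠ j) (h' : i ≠ k) :
    Xop i * (Zop j * Zop k) = (Zop j * Zop k) * Xop i := by
  rw [← mul_assoc, Xop_mul_Zop_of_ne h, mul_assoc, Xop_mul_Zop_of_ne h', ← mul_assoc]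

lemma PXj {j k : Fin n} (h : j ≠ k) :
    (Zop j * Zop k) * Xop j = -(Xop j * (Zop j * Zop k)) := by
  rw [mul_assoc, ← Xop_mul_Zop_of_ne h, ← mul_assoc, Zop_mul_Xop_self, neg_mul, mul_assoc]

lemma PXk {j k : Fin n} (h : j ≠ k) :
    (Zop j * Zop k) * Xop k = -(Xop k * (Zop j * Zop k)) := by
  rw [mul_assoc, Zop_mul_Xop_self, mul_neg, ← mul_assoc, ← Xop_mul_Zop_of_ne (Ne.symm h),
    mul_assoc]

lemma gradB_ZZ {j k : Fin n} (h : j ≠ k) :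
    gradB (Zop j * Zop k)
      = (2:ℂ) • (Xop j * (Zop j * Zop k)) + (2:ℂ) • (Xop k * (Zop j * Zop k)) := by
  rw [gradB_eq_sum, sum_eq_pair h _ (fun i hij hik => by rw [XP_comm hij hik, sub_self])]
  rw [PXj h, PXk h, sub_neg_eq_add, sub_neg_eq_add, two_smul, two_smul]

lemma gradB_XjZZ {j k : Fin n} (h : j ≠ k) :
    gradB (Xop j * (Zop j * Zop k))
      = (2:ℂ) • (Zop j * Zop k) + (2:ℂ) • (Xop j * (Xop k * (Zop j * Zop k))) := by
  rw [gradB_eq_sum, sum_eq_pair h _ (fun i hij hik => by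
    rw [← mul_assoc, Xop_comm i j, mul_assoc, XP_comm hij hik, ← mul_assoc, sub_self])]
  congr 1
  · rw [← mul_assoc, Xop_mul_self, one_mul, mul_assoc, PXj h, mul_neg, ← mul_assoc,
      Xop_mul_self, one_mul, sub_neg_eq_add, two_smul]
  · rw [← mul_assoc, Xop_comm k j, mul_assoc, mul_assoc, PXk h, mul_neg,
      sub_neg_eq_add, two_smul]

lemma gradB_XkZZ {j k : Fin n} (h : j ≠ k) :
    gradB (Xop k * (Zop j * Zop k))
      = (2:ℂ) • (Xop j * (Xop k * (Zop j * Zop k))) + (2:ℂ) • (Zop j * Zop k) := by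
  rw [gradB_eq_sum, sum_eq_pair h _ (fun i hij hik => by
    rw [← mul_assoc, Xop_comm i k, mul_assoc, XP_comm hij hik, ← mul_assoc, sub_self])]
  congr 1
  · rw [← mul_assoc, Xop_comm j k, mul_assoc, mul_assoc, PXj h, mul_neg,
      sub_neg_eq_add, ← mul_assoc, Xop_comm k j, mul_assoc, two_smul]
  · rw [← mul_assoc, Xop_mul_self, one_mul, mul_assoc, PXk h, mul_neg, ← mul_assoc,
      Xop_mul_self, one_mul, sub_neg_eq_add, two_smul]

lemma gradB_XXZZ {j k : Fin n} (h : j ≠ k) :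
    gradB (Xop j * (Xop k * (Zop j * Zop k)))
      = (2:ℂ) • (Xop k * (Zop j * Zop k)) + (2:ℂ) • (Xop j * (Zop j * Zop k)) := by
  rw [gradB_eq_sum, sum_eq_pair h _ (fun i hij hik => by
    have hcom : Xop i * (Xop k * (Zop j * Zop k)) = (Xop k * (Zop j * Zop k)) * Xop i := by
      rw [← mul_assoc, Xop_comm i k, mul_assoc, XP_comm hij hik, ← mul_assoc]
    rw [← mul_assoc, Xop_comm i j, mul_assoc, hcom, ← mul_assoc, sub_self])]
  have e1 : Xop j * (Xop k * (Zop j * Zop k)) * Xop j = -(Xop k * (Zop j * Zop k)) := by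
    rw [mul_assoc, mul_assoc, PXj h, mul_neg, mul_neg, ← mul_assoc (Xop k), Xop_comm k j,
      mul_assoc, ← mul_assoc, Xop_mul_self, one_mul]
  have e2 : Xop k * (Xop j * (Xop k * (Zop j * Zop k))) = Xop j * (Zop j * Zop k) := by
    rw [← mul_assoc, Xop_comm k j, mul_assoc, ← mul_assoc (Xop k), Xop_mul_self, one_mul]
  have e3 : Xop j * (Xop k * (Zop j * Zop k)) * Xop k = -(Xop j * (Zop j * Zop k)) := by
    rw [mul_assoc, mul_assoc, PXk h, mul_neg, mul_neg, ← mul_assoc (Xop k), Xop_mul_self,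
      one_mul]
  congr 1
  · rw [← mul_assoc, Xop_mul_self, one_mul, e1, sub_neg_eq_add, two_smul]
  · rw [e2, e3, sub_neg_eq_add, two_smul]

lemma grad3_ZZ {j k : Fin n} (h : j ≠ k) :
    gradB (gradB (gradB (Zop j * Zop k))) = (16:ℂ) • gradB (Zop j * Zop k) := by
  simp only [gradB_ZZ h, gradB_add, gradB_smul, gradB_XjZZ h, gradB_XkZZ h, gradB_XXZZ h]
  module

theorem stmt15 (n : ℕ) (hn : 1 ≤ n) (a0 : ℝ) (a : Fin n → ℝ) (A : Fin n → Fin n → ℝ)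
    (C C1 C2 : Matrix (Bits n) (Bits n) ℂ)
    (hC1 : C1 = ∑ j : Fin n, (a j : ℂ) • Zop j)
    (hC2 : C2 = ∑ j : Fin n, ∑ k : Fin n, if j < k then (A j k : ℂ) • (Zop j * Zop k) else 0)
    (hC : C = (a0 : ℂ) • (1 : Matrix (Bits n) (Bits n) ℂ) + C1 + C2)
    (m : ℕ) (hm : 1 ≤ m) :
    gradB^[2 * m] C = ((4 : ℂ) ^ m) • C1 + ((16 : ℂ) ^ (m - 1)) • gradB^[2] C2 ∧
    gradB^[2 * m + 1] C = ((4 : ℂ) ^ m) • gradB C1 + ((16 : ℂ) ^ m) • gradB C2 := by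
  have hit2 : ∀ M : Matrix (Bits n) (Bits n) ℂ, gradB^[2] M = gradB (gradB M) := fun M => rfl
  have hC1fact : gradB (gradB C1) = (4:ℂ) • C1 := by
    rw [hC1]
    simp only [gradB_sum, gradB_smul, gradB2_Zop, Finset.smul_sum, smul_smul, mul_comm]
  have hC2fact : gradB (gradB (gradB C2)) = (16:ℂ) • gradB C2 := by
    rw [hC2]
    simp only [gradB_sum, apply_ite (gradB (n := n)), gradB_zero, gradB_smul,
      Finset.smul_sum, smul_ite, smul_zero]
    refine Finset.sum_congr rfl fun j _ => Finset.sum_congr rfl fun k _ => ?_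
    split_ifs with h
    · rw [grad3_ZZ (ne_of_lt h), smul_smul, smul_smul, mul_comm]
    · rfl
  have h4C2 : gradB (gradB (gradB (gradB C2))) = (16:ℂ) • gradB (gradB C2) := by
    rw [hC2fact, gradB_smul]
  have h0 : gradB C = gradB C1 + gradB C2 := by
    rw [hC, gradB_add, gradB_add, gradB_smul, gradB_one, smul_zero, zero_add]
  have key : gradB^[2 * m] C = ((4 : ℂ) ^ m) • C1 + ((16 : ℂ) ^ (m - 1)) • gradB^[2] C2 := by
    induction m, hm using Nat.le_induction with
    | base =>
      show gradB^[2] C = _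
      rw [hit2, hit2, h0, gradB_add, hC1fact]
      norm_num
    | succ m hm ih =>
      have h2 : 2 * (m + 1) = 2 + 2 * m := by ring
      rw [h2, Function.iterate_add_apply, ih, hit2, hit2, gradB_add, gradB_add,
        gradB_smul, gradB_smul, gradB_smul, gradB_smul, hC1fact, h4C2,
        smul_smul, smul_smul, ← pow_succ, ← pow_succ, Nat.sub_add_cancel hm]
      simp
  refine ⟨key, ?_⟩
  have h1 : 2 * m + 1 = 1 + 2 * m := by ring
  rw [h1, Function.iterate_add_apply, Function.iterate_one, key, gradB_add, gradB_smul,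
    gradB_smul, hit2, hC2fact, smul_smul, ← pow_succ, Nat.sub_add_cancel hm]
end
end
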